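/- de Bruijn identity: for measurable functions f₁,…,f_k, g₁,…,g_k on a measure space (X, μ) with all products f_a·g_b integrable on W ⊆ X, one has k! · det[∫_W f_a(ζ) g_b(ζ) dμ(ζ)]_{a,b=1..k} = ∫_{W^k} det[f_a(ζ_c)]_{a,c} · det[g_b(ζ_d)]_{b,d} ∏_{j=1}^k dμ(ζ_j). -/

import Mathlib

open MeasureTheory

/-- Sign of a permutation as a complex number. -/
private def psgn {k : ℕ} (σ : Equiv.Perm (Fin k)) : ℂ :=
  ((Equiv.Perm.sign σ : ℤ) : ℂ)

private lemma psgn_mul {k : ℕ} (σ τ : Equiv.Perm (Fin k)) :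
    psgn (σ * τ) = psgn σ * psgn τ := by
  simp [psgn]

private lemma psgn_mul_self {k : ℕ} (σ : Equiv.Perm (Fin k)) :
    psgn σ * psgn σ = 1 := by
  rcases Int.units_eq_one_or (Equiv.Perm.sign σ) with h | h <;> simp [psgn, h]

private lemma det_eq_sum_psgn {k : ℕ} (M : Matrix (Fin k) (Fin k) ℂ) :
    M.det = ∑ σ : Equiv.Perm (Fin k), psgn σ * ∏ i, M (σ i) i := by
  rw [Matrix.det_apply]
  refine Finset.sum_congr rfl fun σ _ => ?_
  simp [psgn, Units.smul_def, zsmul_eq_mul]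

private lemma det_eq_sum_psgn' {k : ℕ} (M : Matrix (Fin k) (Fin k) ℂ) :
    M.det = ∑ σ : Equiv.Perm (Fin k), psgn σ * ∏ i, M i (σ i) := by
  rw [← Matrix.det_transpose]
  exact det_eq_sum_psgn M.transpose

/-- The key algebraic identity on permutation sums. -/
private lemma perm_sum_eq {k : ℕ} (M : Matrix (Fin k) (Fin k) ℂ) :
    ∑ σ : Equiv.Perm (Fin k), ∑ τ : Equiv.Perm (Fin k),
      psgn σ * psgn τ * ∏ i, M (σ i) (τ i)
    = (k.factorial : ℂ) * M.det := by
  have h : ∀ σ : Equiv.Perm (Fin k),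
      ∑ τ : Equiv.Perm (Fin k), psgn σ * psgn τ * ∏ i, M (σ i) (τ i) = M.det := by
    intro σ
    rw [← Equiv.sum_comp (Equiv.mulRight σ)
      (fun τ => psgn σ * psgn τ * ∏ i, M (σ i) (τ i))]
    have key : ∀ π : Equiv.Perm (Fin k),
        psgn σ * psgn (π * σ) * ∏ i, M (σ i) ((π * σ) i)
          = psgn π * ∏ i, M i (π i) := by
      intro π
      have h1 : ∏ i, M (σ i) ((π * σ) i) = ∏ i, M i (π i) := by
        rw [← Equiv.prod_comp σ (fun a => M a (π a))]
        rfl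
      rw [h1, psgn_mul]
      calc psgn σ * (psgn π * psgn σ) * ∏ i, M i (π i)
          = (psgn σ * psgn σ) * (psgn π * ∏ i, M i (π i)) := by ring
        _ = psgn π * ∏ i, M i (π i) := by rw [psgn_mul_self, one_mul]
    simp only [Equiv.coe_mulRight, key]
    rw [← det_eq_sum_psgn' M]
  rw [Finset.sum_congr rfl fun σ _ => h σ, Finset.sum_const, Finset.card_univ,
    Fintype.card_perm, Fintype.card_fin, nsmul_eq_mul]

private lemma restrict_pi_pi {X : Type*} [MeasurableSpace X] (μ : Measure X) [SigmaFinite μ]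
    (W : Set X) (hW : MeasurableSet W) (k : ℕ) :
    Measure.pi (fun _ : Fin k => μ.restrict W)
      = (Measure.pi fun _ : Fin k => μ).restrict (Set.univ.pi fun _ : Fin k => W) := by
  refine Measure.pi_eq fun s hs => ?_
  rw [Measure.restrict_apply (MeasurableSet.univ_pi hs), ← Set.pi_inter_distrib,
    Measure.pi_pi]
  exact Finset.prod_congr rfl fun i _ => (Measure.restrict_apply (hs i)).symm

/-- de Bruijn identity: for measurable `f₁,…,f_k, g₁,…,g_k` on a measure space `(X, μ)` with
all products `f_a·g_b` integrable on `W ⊆ X`,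
`k! · det[∫_W f_a g_b dμ] = ∫_{W^k} det[f_a(ζ_c)]·det[g_b(ζ_d)] ∏ dμ(ζ_j)`. -/
theorem deBruijn_identity
    {X : Type*} [MeasurableSpace X] (μ : Measure X) [SigmaFinite μ]
    (W : Set X) (hW : MeasurableSet W) (k : ℕ)
    (f g : Fin k → X → ℂ)
    (hf : ∀ a, Measurable (f a)) (hg : ∀ b, Measurable (g b))
    (hint : ∀ a b, IntegrableOn (fun ζ => f a ζ * g b ζ) W μ) :
    (k.factorial : ℂ) *
        Matrix.det (Matrix.of fun a b => ∫ ζ in W, f a ζ * g b ζ ∂μ)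
      = ∫ ζ in Set.univ.pi (fun _ : Fin k => W),
          Matrix.det (Matrix.of fun a c => f a (ζ c)) *
            Matrix.det (Matrix.of fun b d => g b (ζ d))
          ∂(Measure.pi fun _ : Fin k => μ) := by
  classical
  letI : MeasureSpace X := ⟨μ.restrict W⟩
  have hvol : (volume : Measure X) = μ.restrict W := rfl
  haveI : SigmaFinite (volume : Measure X) := Restrict.sigmaFinite μ W
  set M : Matrix (Fin k) (Fin k) ℂ :=
    Matrix.of fun a b => ∫ ζ in W, f a ζ * g b ζ ∂μ with hM
  symm
  calc
    ∫ ζ in Set.univ.pi (fun _ : Fin k => W),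
        Matrix.det (Matrix.of fun a c => f a (ζ c)) *
          Matrix.det (Matrix.of fun b d => g b (ζ d))
        ∂(Measure.pi fun _ : Fin k => μ)
      = ∫ ζ : Fin k → X,
          Matrix.det (Matrix.of fun a c => f a (ζ c)) *
            Matrix.det (Matrix.of fun b d => g b (ζ d)) := by
        rw [← restrict_pi_pi μ W hW k]
        rfl
    _ = ∫ ζ : Fin k → X, ∑ σ : Equiv.Perm (Fin k), ∑ τ : Equiv.Perm (Fin k),
          psgn σ * psgn τ * ∏ i, (f (σ i) (ζ i) * g (τ i) (ζ i)) := by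
        congr 1
        funext ζ
        rw [det_eq_sum_psgn, det_eq_sum_psgn, Finset.sum_mul_sum]
        refine Finset.sum_congr rfl fun σ _ => Finset.sum_congr rfl fun τ _ => ?_
        rw [Finset.prod_mul_distrib]
        simp only [Matrix.of_apply]
        ring
    _ = ∑ σ : Equiv.Perm (Fin k), ∑ τ : Equiv.Perm (Fin k),
          ∫ ζ : Fin k → X, psgn σ * psgn τ * ∏ i, (f (σ i) (ζ i) * g (τ i) (ζ i)) := by
        rw [integral_finset_sum]
        · exact Finset.sum_congr rfl fun σ _ => integral_finset_sum _ fun τ _ =>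
            ((Integrable.fintype_prod (f := fun i x => f (σ i) x * g (τ i) x)
              fun i => hint (σ i) (τ i)).const_mul _)
        · intro σ _
          exact integrable_finset_sum _ fun τ _ =>
            ((Integrable.fintype_prod (f := fun i x => f (σ i) x * g (τ i) x)
              fun i => hint (σ i) (τ i)).const_mul _)
    _ = ∑ σ : Equiv.Perm (Fin k), ∑ τ : Equiv.Perm (Fin k),
          psgn σ * psgn τ * ∏ i, M (σ i) (τ i) := by
        refine Finset.sum_congr rfl fun σ _ => Finset.sum_congr rfl fun τ _ => ?_
        rw [integral_const_mul,
          integral_fintype_prod_volume_eq_prod (ι := Fin k) (fun i x => f (σ i) x * g (τ i) x)]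
        rfl
    _ = (k.factorial : ℂ) * M.det := perm_sum_eq M
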